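/- Let X be a Bernoulli random variable. Then for every t ∈ [−π, π], |E[e^{itX}]| ≤ exp(−Δ_∞(X)·t²/24). -/

import Mathlib

set_option maxHeartbeats 1000000

open MeasureTheory ProbabilityTheory Real

lemma poly_mul_exp_hasDeriv (x : ℝ) :
    HasDerivAt (fun u : ℝ => (1 - u + u^2/2 - u^3/6) * Real.exp u) (-x^3/6 * Real.exp x) x := by
  have hp : HasDerivAt (fun u : ℝ => 1 - u + u^2/2 - u^3/6)
      (0 - 1 + (↑2 * x ^ 1)/2 - (↑3 * x ^ 2)/6) x := by
    exact (((hasDerivAt_const x (1:ℝ)).sub (hasDerivAt_id x)).add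
      ((hasDerivAt_pow 2 x).div_const 2)).sub ((hasDerivAt_pow 3 x).div_const 6)
  have this : HasDerivAt (fun u : ℝ => (1 - u + u^2/2 - u^3/6) * Real.exp u) _ x := hp.mul (Real.hasDerivAt_exp x)
  convert this using 1
  norm_num
  ring

lemma exp_cubic_lb (u : ℝ) (hu : 0 ≤ u) : 1 - u + u^2/2 - u^3/6 ≤ Real.exp (-u) := by
  set f : ℝ → ℝ := fun u => (1 - u + u^2/2 - u^3/6) * Real.exp u with hf
  have hdiff : Differentiable ℝ f := fun x => (poly_mul_exp_hasDeriv x).differentiableAt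
  have hanti : AntitoneOn f (Set.Ici (0:ℝ)) := by
    apply antitoneOn_of_deriv_nonpos (convex_Ici 0) hdiff.continuous.continuousOn
      hdiff.differentiableOn
    intro x hx
    rw [interior_Ici] at hx
    rw [(poly_mul_exp_hasDeriv x).deriv]
    have : (0:ℝ) < x := hx
    nlinarith [Real.exp_pos x, pow_pos this 3]
  have h0 : f 0 = 1 := by simp [hf]
  have hle : f u ≤ 1 := h0 ▸ hanti Set.self_mem_Ici (Set.mem_Ici.2 hu) hu
  simp only [hf] at hle
  have hprod : Real.exp (-u) * Real.exp u = 1 := by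
    rw [← Real.exp_add]; simp
  nlinarith [Real.exp_pos u, hle, hprod]


lemma cos_le_exp_neg_sq (x : ℝ) (hx0 : 0 ≤ x) (hx : x ≤ π/2) :
    Real.cos x ≤ Real.exp (-(x^2/2)) := by
  rcases eq_or_lt_of_le hx0 with h | h
  · simp [← h]
  · set y := x/2 with hy
    have hy0 : 0 < y := by positivity
    have hy1 : y ≤ 1 := by
      have : π ≤ 4 := by nlinarith [Real.pi_lt_d2]
      rw [hy]; nlinarith
    have hsin : y - y^3/4 < Real.sin y := by have := Real.sin_gt_sub_cube hy0; nlinarith [pow_pos hy0 3]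
    have hy3 : y^3 ≤ y := by nlinarith [mul_nonneg (mul_nonneg hy0.le hy0.le) (sub_nonneg.2 hy1)]
    have hsinpos : 0 ≤ y - y^3/4 := by nlinarith
    have hcos : Real.cos x = 1 - 2 * Real.sin y ^ 2 := by
      have h2 : Real.cos (2*y) = 1 - 2 * Real.sin y ^2 := Real.cos_two_mul' y ▸ by
        nlinarith [Real.sin_sq_add_cos_sq y]
      rw [hy] at h2 ⊢
      norm_num at h2 ⊢
      convert h2 using 2
      ring
    have hexp : 1 - 2*y^2 + 2*y^4 - (4/3)*y^6 ≤ Real.exp (-(x^2/2)) := by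
      have := exp_cubic_lb (2*y^2) (by positivity)
      have hxy : x^2/2 = 2*y^2 := by rw [hy]; ring
      rw [hxy]
      nlinarith [this]
    have hy2 : y^2 ≤ 24/29 := by
      have : y ≤ π/4 := by rw [hy]; linarith
      nlinarith [Real.pi_lt_d2]
    rw [hcos]
    have hsq : (y - y^3/4)^2 ≤ Real.sin y ^2 := by nlinarith
    nlinarith [hsq, hexp, mul_nonneg (pow_nonneg hy0.le 4) (sub_nonneg.2 hy2)]

section numeric

lemma Q_bounds : 2.4674 ≤ π^2/4 ∧ π^2/4 ≤ 2.4675 := by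
  have h1 := Real.pi_gt_d6
  have h2 := Real.pi_lt_d6
  constructor <;> nlinarith

lemma expQ_ub : Real.exp (π^2/4) ≤ 12.19 := by
  have h05 : Real.exp 0.5 * Real.exp 0.5 = Real.exp 1 := by
    rw [← Real.exp_add]; norm_num
  have he1 : Real.exp 1 < 2.7182818286 := Real.exp_one_lt_d9
  have h05' : Real.exp 0.5 ≤ 1.64873 := by nlinarith [Real.exp_pos 0.5]
  have h25 : Real.exp 2.5 = Real.exp 1 * Real.exp 1 * Real.exp 0.5 := by
    rw [← Real.exp_add, ← Real.exp_add]; norm_num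
  have h25' : Real.exp 2.5 ≤ 12.19 := by
    rw [h25]; nlinarith [Real.exp_pos 1, Real.exp_pos 0.5, (Real.exp_pos 1).le]
  have hQ : π^2/4 ≤ 2.5 := by nlinarith [Q_bounds.2]
  exact (Real.exp_le_exp.2 hQ).trans h25'

lemma expQ_lb : 10 ≤ Real.exp (π^2/4) := by
  have he1 : (2.718281828 : ℝ) < Real.exp 1 := by
    have := Real.exp_one_gt_d9; nlinarith
  have hq : 1 + 0.4674 + 0.4674^2/2 ≤ Real.exp 0.4674 :=
    Real.quadratic_le_exp_of_nonneg (by norm_num)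
  have h2464 : Real.exp 2.4674 = Real.exp 1 * Real.exp 1 * Real.exp 0.4674 := by
    rw [← Real.exp_add, ← Real.exp_add]; norm_num
  have h1 : (10:ℝ) ≤ Real.exp 2.4674 := by
    rw [h2464]
    nlinarith [Real.exp_pos 0.4674, Real.exp_pos 1]
  exact h1.trans (Real.exp_le_exp.2 Q_bounds.1)

end numeric

-- assume available: expQ_ub, expQ_lb, Q_bounds
-- Endpoint inequality: a²·e^Q + b ≤ exp(Q(1-L))
lemma endpoint_aux (m : ℝ) (hm : 1/2 ≤ m) (hm1 : m ≤ 1) :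
    (2*m-1)^2 * Real.exp (π^2/4) + 4*m*(1-m) ≤
      Real.exp ((π^2/4) * (1 - (1-m^2)/(3*m^2))) := by
  have hm0 : (0:ℝ) < m := by linarith
  have h3m : (0:ℝ) < 3*m^2 := by positivity
  set Q : ℝ := π^2/4 with hQdef
  have hQl : (2.4674:ℝ) ≤ Q := Q_bounds.1
  have hQu : Q ≤ (2.4675:ℝ) := Q_bounds.2
  have hL_eq : 1 - (1-m^2)/(3*m^2) = (4*m^2-1)/(3*m^2) := by
    field_simp; ring
  rw [hL_eq]
  rcases le_total m (3/4) with hc | hc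
  · -- poly case
    set w : ℝ := Q * ((4*m^2-1)/(3*m^2)) with hwdef
    have hw_mul : w * (3*m^2) = Q * (4*m^2-1) := by
      rw [hwdef]; field_simp
    have hw0 : 0 ≤ w := by
      apply mul_nonneg (by positivity)
      apply div_nonneg (by nlinarith) (by positivity)
    have hexpw : 1 + w + w^2/2 ≤ Real.exp (Q * ((4*m^2-1)/(3*m^2))) := by
      rw [← hwdef]; exact Real.quadratic_le_exp_of_nonneg hw0
    have hscaled : 11.19 * (2*m-1)^2 * (9*m^4) ≤
        3*m^2*(Q*(4*m^2-1)) + (Q*(4*m^2-1))^2/2 := by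
      have h41 : (0:ℝ) ≤ 4*m^2-1 := by nlinarith
      nlinarith [sq_nonneg (2*m-1), sq_nonneg m, mul_nonneg (sub_nonneg.2 hQl) (mul_nonneg h3m.le h41),
        mul_nonneg (mul_nonneg (sub_nonneg.2 hm) (sub_nonneg.2 hc)) (sq_nonneg (2*m-1)),
        mul_nonneg (sub_nonneg.2 hm) (sub_nonneg.2 hc),
        mul_nonneg (mul_nonneg (sub_nonneg.2 hm) (sub_nonneg.2 hc)) (sq_nonneg m),
        sq_nonneg (Q*(4*m^2-1)), mul_nonneg (sub_nonneg.2 hQl) (sub_nonneg.2 hQl)]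
    have hkey : (2*m-1)^2 * (Real.exp Q - 1) ≤ w + w^2/2 := by
      have h9 : (0:ℝ) < 9*m^4 := by positivity
      have e1 : w + w^2/2 = (3*m^2*(w*(3*m^2)) + (w*(3*m^2))^2/2)/(9*m^4) := by
        field_simp; ring
      rw [e1, hw_mul, le_div_iff₀ h9]
      have hE1 : Real.exp Q - 1 ≤ 11.19 := by
        have := expQ_ub; rw [← hQdef] at this; linarith
      nlinarith [hscaled, mul_nonneg (sq_nonneg (2*m-1)) h9.le,
        mul_nonneg (mul_nonneg (sq_nonneg (2*m-1)) h9.le) (sub_nonneg.2 hE1)]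
    have hab : (2*m-1)^2 + 4*m*(1-m) = 1 := by ring
    linarith [hkey, hexpw]
  · -- large m case
    have hexpQ_lb : (10:ℝ) ≤ Real.exp Q := by have := expQ_lb; rw [← hQdef] at this; exact this
    have hE0 : Real.exp (-Q) * Real.exp Q = 1 := by rw [← Real.exp_add]; simp
    have hE0u : Real.exp (-Q) ≤ 0.1 := by nlinarith [Real.exp_pos (-Q)]
    set L : ℝ := (4*m^2-1)/(3*m^2) with hLdef
    -- we need: a²expQ + b ≤ exp(Q*L) with L = 1-λ
    have hlam : Q * ((1-m^2)/(3*m^2)) ≤ 4*m*(1-m) * (1 - Real.exp (-Q)) := by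
      have hstep : 2.4675*(1-m^2) ≤ 0.9*(4*m*(1-m))*(3*m^2) := by
        nlinarith [mul_nonneg (sub_nonneg.2 hm1) (by nlinarith : (0:ℝ) ≤ 10.8*m^3 - 2.4675*(1+m))]
      have h1 : Q * ((1-m^2)/(3*m^2)) ≤ 2.4675 * ((1-m^2)/(3*m^2)) := by
        apply mul_le_mul_of_nonneg_right hQu
        apply div_nonneg (by nlinarith) (by positivity)
      have h2 : 2.4675 * ((1-m^2)/(3*m^2)) ≤ 0.9*(4*m*(1-m)) := by
        rw [← mul_div_assoc, div_le_iff₀ h3m]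
        nlinarith [hstep]
      have h3 : 0.9*(4*m*(1-m)) ≤ 4*m*(1-m) * (1 - Real.exp (-Q)) := by
        have hb0 : (0:ℝ) ≤ 4*m*(1-m) := by nlinarith
        nlinarith [hE0u, hb0]
      linarith
    -- exp(Q*(1-λ)) = expQ * exp(-Q*λ) ≥ expQ*(1 - Qλ)
    have hsplit : Real.exp (Q * ((4*m^2-1)/(3*m^2))) =
        Real.exp Q * Real.exp (-(Q * ((1-m^2)/(3*m^2)))) := by
      rw [← Real.exp_add]
      congr 1
      field_simp
      ring
    have hlin : 1 - Q * ((1-m^2)/(3*m^2)) ≤ Real.exp (-(Q * ((1-m^2)/(3*m^2)))) := by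
      have := Real.add_one_le_exp (-(Q * ((1-m^2)/(3*m^2))))
      linarith
    rw [hsplit]
    have hexpQpos := Real.exp_pos Q
    -- a²expQ + b ≤ expQ*(1 - Qλ) ≤ expQ * exp(-Qλ)
    have hmain : (2*m-1)^2 * Real.exp Q + 4*m*(1-m) ≤ Real.exp Q * (1 - Q * ((1-m^2)/(3*m^2))) := by
      have hb0 : (0:ℝ) ≤ 4*m*(1-m) := by nlinarith
      have h4 : 4*m*(1-m) * Real.exp (-Q) ≤ 4*m*(1-m) - Q*((1-m^2)/(3*m^2)) := by
        nlinarith [hlam]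
      have h5 : Real.exp Q * (4*m*(1-m)*Real.exp (-Q)) = 4*m*(1-m) := by
        rw [show Real.exp Q * (4*m*(1-m)*Real.exp (-Q)) = 4*m*(1-m)*(Real.exp (-Q)*Real.exp Q) from by ring, hE0, mul_one]
      have h6 : 4*m*(1-m) ≤ Real.exp Q * (4*m*(1-m) - Q*((1-m^2)/(3*m^2))) := by
        calc 4*m*(1-m) = Real.exp Q * (4*m*(1-m)*Real.exp (-Q)) := h5.symm
          _ ≤ Real.exp Q * (4*m*(1-m) - Q*((1-m^2)/(3*m^2))) :=
              mul_le_mul_of_nonneg_left h4 hexpQpos.le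
      have hrg : Real.exp Q * (1 - Q * ((1-m^2)/(3*m^2))) =
          (2*m-1)^2 * Real.exp Q + Real.exp Q * (4*m*(1-m) - Q*((1-m^2)/(3*m^2))) := by
        ring
      linarith
    calc (2*m-1)^2 * Real.exp Q + 4*m*(1-m) ≤ Real.exp Q * (1 - Q * ((1-m^2)/(3*m^2))) := hmain
      _ ≤ Real.exp Q * Real.exp (-(Q * ((1-m^2)/(3*m^2)))) := by
          apply mul_le_mul_of_nonneg_left hlin hexpQpos.le

lemma key_ineq (m q : ℝ) (hm : 1/2 ≤ m) (hm1 : m ≤ 1) (hq0 : 0 ≤ q) (hqQ : q ≤ π^2/4) :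
    (2*m-1)^2 + 4*m*(1-m) * Real.exp (-q) ≤ Real.exp (-((1-m^2)/(3*m^2)) * q) := by
  have hm0 : (0:ℝ) < m := by linarith
  have h3m : (0:ℝ) < 3*m^2 := by positivity
  have hL0 : 0 ≤ (1-m^2)/(3*m^2) := div_nonneg (by nlinarith) h3m.le
  have hL1 : (1-m^2)/(3*m^2) ≤ 1 := by
    rw [div_le_one h3m]; nlinarith
  have hQ0 : (0:ℝ) < π^2/4 := by positivity
  -- endpoint in rpow form
  have hexpE0 : Real.exp (-(π^2/4)) * Real.exp (π^2/4) = 1 := by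
    rw [← Real.exp_add]; simp
  have hend : (2*m-1)^2 + 4*m*(1-m) * Real.exp (-(π^2/4)) ≤
      Real.exp (-(π^2/4)) ^ ((1-m^2)/(3*m^2)) := by
    have h1 := endpoint_aux m hm hm1
    have h2 := mul_le_mul_of_nonneg_right h1 (Real.exp_pos (-(π^2/4))).le
    have h3 : ((2*m-1)^2 * Real.exp (π^2/4) + 4*m*(1-m)) * Real.exp (-(π^2/4)) =
        (2*m-1)^2 * (Real.exp (-(π^2/4)) * Real.exp (π^2/4)) +
          4*m*(1-m) * Real.exp (-(π^2/4)) := by ring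
    have h4 : Real.exp ((π^2/4) * (1 - (1-m^2)/(3*m^2))) * Real.exp (-(π^2/4)) =
        Real.exp (-(π^2/4) * ((1-m^2)/(3*m^2))) := by
      rw [← Real.exp_add]; congr 1; ring
    rw [h3, hexpE0, mul_one, h4] at h2
    rw [← Real.exp_mul]
    exact h2
  -- concavity
  set E0 : ℝ := Real.exp (-(π^2/4)) with hE0def
  set E : ℝ := Real.exp (-q) with hEdef
  have hE0pos : 0 < E0 := Real.exp_pos _
  have hEpos : 0 < E := Real.exp_pos _
  have hE0E : E0 ≤ E := Real.exp_le_exp.2 (by linarith)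
  have hE1 : E ≤ 1 := Real.exp_le_one_iff.2 (by linarith)
  have hE0lt1 : E0 < 1 := Real.exp_lt_one_iff.2 (by linarith)
  have hden : 0 < 1 - E0 := by linarith
  set α : ℝ := (1-E)/(1-E0) with hαdef
  set β : ℝ := (E-E0)/(1-E0) with hβdef
  have hα : 0 ≤ α := div_nonneg (by linarith) hden.le
  have hβ : 0 ≤ β := div_nonneg (by linarith) hden.le
  have hsum : α + β = 1 := by rw [hαdef, hβdef]; field_simp; ring
  have hcomb : α * E0 + β * 1 = E := by
    rw [hαdef, hβdef]; field_simp; ring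
  have cc := (Real.concaveOn_rpow hL0 hL1).2 (Set.mem_Ici.2 hE0pos.le)
    (Set.mem_Ici.2 (zero_le_one (α := ℝ))) hα hβ hsum
  simp only [smul_eq_mul] at cc
  rw [hcomb] at cc
  -- cc : α * E0 ^ L + β * 1 ^ L ≤ E ^ L
  rw [Real.one_rpow] at cc
  have hcombo : (2*m-1)^2 + 4*m*(1-m) * E =
      α * ((2*m-1)^2 + 4*m*(1-m) * E0) + β * ((2*m-1)^2 + 4*m*(1-m) * 1) := by
    have hcomb' : α * E0 + β = E := by rw [← hcomb]; ring
    linear_combination (-(2*m-1)^2) * hsum + (-(4*m*(1-m))) * hcomb'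
  have hab : (2*m-1)^2 + 4*m*(1-m) * 1 = 1 := by ring
  have hstep : (2*m-1)^2 + 4*m*(1-m) * E ≤ α * E0 ^ ((1-m^2)/(3*m^2)) + β * 1 := by
    rw [hcombo, hab]
    have := mul_le_mul_of_nonneg_left hend hα
    linarith
  have hfin : (2*m-1)^2 + 4*m*(1-m) * E ≤ E ^ ((1-m^2)/(3*m^2)) := le_trans hstep cc
  have hrw : E ^ ((1-m^2)/(3*m^2)) = Real.exp (-((1-m^2)/(3*m^2)) * q) := by
    rw [hEdef, ← Real.exp_mul]; congr 1; ring
  rw [← hrw]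
  exact hfin

noncomputable def DeltaInf {Ω : Type*} [MeasureSpace Ω] (X : Ω → ℤ) : ℝ :=
  ((⨆ n : ℤ, (ℙ {ω | X ω = n}).toReal) ^ 2)⁻¹ - 1

theorem bernoulli_charfun_exp_bound
    {Ω : Type*} [MeasureSpace Ω] [IsProbabilityMeasure (ℙ : Measure Ω)]
    (X : Ω → ℤ) (hXm : Measurable X) (hX01 : ∀ ω, X ω = 0 ∨ X ω = 1)
    (t : ℝ) (ht : t ∈ Set.Icc (-π) π) :
    ‖∫ ω, Complex.exp ((t * (X ω : ℝ) : ℝ) * Complex.I) ∂ℙ‖ ≤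
      Real.exp (-(DeltaInf X * t ^ 2) / 24) := by
  obtain ⟨htl, htu⟩ := ht
  -- the event
  set A : Set Ω := {ω | X ω = 1} with hAdef
  have hA : MeasurableSet A := by
    have : A = X ⁻¹' {1} := by ext ω; simp [hAdef]
    rw [this]; exact hXm (measurableSet_singleton 1)
  set θ : ℝ := (ℙ A).toReal with hθdef
  have hθ0 : 0 ≤ θ := ENNReal.toReal_nonneg
  have hθ1 : θ ≤ 1 := by
    rw [hθdef]
    have h := prob_le_one (μ := (ℙ : Measure Ω)) (s := A)
    simpa using ENNReal.toReal_mono (by simp) h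
  -- integral computation
  have hfeq : (fun ω => Complex.exp ((t * (X ω : ℝ) : ℝ) * Complex.I)) =
      (fun ω => A.indicator (fun _ => Complex.exp (t * Complex.I) - 1) ω + 1) := by
    funext ω
    rcases hX01 ω with h | h
    · have hω : ω ∉ A := by simp [hAdef, h]
      rw [Set.indicator_of_notMem hω]
      simp [h]
    · have hω : ω ∈ A := by simp [hAdef, h]
      rw [Set.indicator_of_mem hω]
      simp [h]
  have hint : ∫ ω, Complex.exp ((t * (X ω : ℝ) : ℝ) * Complex.I) ∂ℙ =
      (θ : ℂ) * (Complex.exp (t * Complex.I) - 1) + 1 := by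
    rw [hfeq]
    rw [integral_add ((integrable_const _).indicator hA) (integrable_const 1)]
    rw [integral_indicator_const _ hA, integral_const]
    simp [hθdef, Complex.real_smul, measureReal_def]
  rw [hint]
  set φ : ℂ := (θ : ℂ) * (Complex.exp (t * Complex.I) - 1) + 1 with hφdef
  have hre : φ.re = θ * (Real.cos t - 1) + 1 := by
    simp [hφdef, Complex.exp_ofReal_mul_I_re, Complex.exp_ofReal_mul_I_im]
  have him : φ.im = θ * Real.sin t := by
    simp [hφdef, Complex.exp_ofReal_mul_I_re, Complex.exp_ofReal_mul_I_im]
  have hnsq : ‖φ‖^2 = φ.re^2 + φ.im^2 := by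
    rw [← Complex.normSq_eq_norm_sq, Complex.normSq_apply]; ring
  have hval : ‖φ‖^2 = (1-2*θ)^2 + 4*θ*(1-θ) * Real.cos (t/2)^2 := by
    rw [hnsq, hre, him]
    have h1 : Real.cos t = 2 * Real.cos (t/2)^2 - 1 := by
      have := Real.cos_two_mul (t/2)
      rw [show 2*(t/2) = t from by ring] at this
      exact this
    have h2 : Real.sin t = 2 * Real.sin (t/2) * Real.cos (t/2) := by
      have := Real.sin_two_mul (t/2)
      rw [show 2*(t/2) = t from by ring] at this
      exact this
    have h3 : Real.sin (t/2)^2 = 1 - Real.cos (t/2)^2 := Real.sin_sq (t/2)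
    rw [h1, h2]
    linear_combination (4*θ^2*Real.cos (t/2)^2) * h3
  -- the supremum
  set p0 : ℝ := (ℙ {ω | X ω = 0}).toReal with hp0def
  have hcompl : {ω | X ω = 0} = Aᶜ := by
    ext ω
    simp only [Set.mem_setOf_eq, Set.mem_compl_iff, hAdef]
    constructor
    · intro h h1; rw [h1] at h; exact absurd h (by norm_num)
    · intro h; rcases hX01 ω with h0 | h1
      · exact h0
      · exact absurd h1 h
  have hp0 : p0 = 1 - θ := by
    rw [hp0def, hcompl, prob_compl_eq_one_sub hA,
      ENNReal.toReal_sub_of_le (prob_le_one) (by simp)]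
    simp [hθdef]
  set m : ℝ := max (1-θ) θ with hmdef
  have hm : 1/2 ≤ m := by
    rcases le_total θ (1/2) with h | h
    · exact le_max_iff.2 (Or.inl (by linarith))
    · exact le_max_iff.2 (Or.inr h)
  have hm1 : m ≤ 1 := max_le (by linarith) hθ1
  have hbdd : BddAbove (Set.range fun n : ℤ => (ℙ {ω | X ω = n}).toReal) := by
    refine ⟨1, ?_⟩
    rintro _ ⟨n, rfl⟩
    simpa using ENNReal.toReal_mono (by simp) (prob_le_one (μ := (ℙ : Measure Ω)) (s := {ω | X ω = n}))
  have hsup : (⨆ n : ℤ, (ℙ {ω | X ω = n}).toReal) = m := by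
    apply le_antisymm
    · apply ciSup_le
      intro n
      by_cases h0 : n = 0
      · subst h0
        rw [← hp0def, hp0]
        exact le_max_left _ _
      · by_cases h1 : n = 1
        · subst h1
          rw [← hAdef, ← hθdef]
          exact le_max_right _ _
        · have hempty : {ω | X ω = n} = ∅ := by
            ext ω
            simp only [Set.mem_setOf_eq, Set.mem_empty_iff_false, iff_false]
            intro h
            rcases hX01 ω with h' | h' <;> rw [h'] at h
            · exact h0 h.symm
            · exact h1 h.symm
          rw [hempty]
          simp
          exact le_trans hθ0 (le_max_right _ _)
    · rcases max_cases (1-θ) θ with ⟨he, _⟩ | ⟨he, _⟩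
      · rw [hmdef, he, ← hp0]
        exact le_ciSup hbdd (0:ℤ)
      · rw [hmdef, he, hθdef]
        exact le_ciSup hbdd (1:ℤ)
  have hDelta : DeltaInf X = (m^2)⁻¹ - 1 := by
    rw [DeltaInf, hsup]
  -- identities relating θ to m
  have hid1 : (1-2*θ)^2 = (2*m-1)^2 := by
    rcases max_cases (1-θ) θ with ⟨he, _⟩ | ⟨he, _⟩ <;> rw [hmdef, he] <;> ring
  have hid2 : 4*θ*(1-θ) = 4*m*(1-m) := by
    rcases max_cases (1-θ) θ with ⟨he, _⟩ | ⟨he, _⟩ <;> rw [hmdef, he] <;> ring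
  -- cosine bound
  have habs : |t|/2 ≤ π/2 := by
    rcases abs_cases t with ⟨he, _⟩ | ⟨he, _⟩ <;> rw [he] <;> linarith
  have hcb := cos_le_exp_neg_sq (|t|/2) (by positivity) habs
  have hcosnn : 0 ≤ Real.cos (|t|/2) := by
    apply Real.cos_nonneg_of_mem_Icc
    constructor
    · have : (0:ℝ) ≤ |t|/2 := by positivity
      linarith [Real.pi_pos]
    · exact habs
  have hcos2 : Real.cos (t/2)^2 ≤ Real.exp (-(t^2/4)) := by
    have heven : Real.cos (t/2) = Real.cos (|t|/2) := by
      rw [show (|t|)/2 = |t/2| from by rw [abs_div]; norm_num, Real.cos_abs]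
    rw [heven]
    have hsq := mul_le_mul hcb hcb hcosnn (Real.exp_pos _).le
    have hexp2 : Real.exp (-((|t|/2)^2/2)) * Real.exp (-((|t|/2)^2/2)) = Real.exp (-(t^2/4)) := by
      rw [← Real.exp_add]
      congr 1
      rw [show (|t|/2)^2 = |t|^2/4 from by ring, sq_abs]
      ring
    calc Real.cos (|t|/2)^2 = Real.cos (|t|/2) * Real.cos (|t|/2) := sq (Real.cos (|t|/2)) ▸ by ring
      _ ≤ Real.exp (-((|t|/2)^2/2)) * Real.exp (-((|t|/2)^2/2)) := hsq
      _ = Real.exp (-(t^2/4)) := hexp2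
  -- apply key inequality
  have hq0 : (0:ℝ) ≤ t^2/4 := by positivity
  have hqQ : t^2/4 ≤ π^2/4 := by nlinarith
  have hkey := key_ineq m (t^2/4) hm hm1 hq0 hqQ
  have hb0 : (0:ℝ) ≤ 4*m*(1-m) := by nlinarith
  have hchain : ‖φ‖^2 ≤ Real.exp (-((1-m^2)/(3*m^2)) * (t^2/4)) := by
    rw [hval, hid1, hid2]
    have := mul_le_mul_of_nonneg_left hcos2 hb0
    linarith
  -- convert RHS
  have hm0 : (0:ℝ) < m := by linarith
  have hRsq : Real.exp (-(DeltaInf X * t ^ 2) / 24) ^ 2 =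
      Real.exp (-((1-m^2)/(3*m^2)) * (t^2/4)) := by
    rw [hDelta, sq, ← Real.exp_add]
    congr 1
    field_simp
    ring
  have hR0 : 0 < Real.exp (-(DeltaInf X * t ^ 2) / 24) := Real.exp_pos _
  nlinarith [hchain, hRsq, norm_nonneg φ, hR0]
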